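/- The subspaces of H copyable along δ_e form a Boolean subalgebra of the lattice of subspaces of H: the collection of copyable subspaces contains ⊥ and ⊤, is closed under meet ⊓, join ⊔ and orthogonal complement ᗮ, and is distributive, i.e. for all copyable K, L, M one has K ⊓ (L ⊔ M) = (K ⊓ L) ⊔ (K ⊓ M). -/

import Mathlib

open scoped TensorProduct InnerProductSpace

/-- The orthogonal projection of `H` onto the subspace `K`, regarded as an endomorphism
`P_K : H →ₗ[ℂ] H`. -/
noncomputable def projL {H : Type*} [NormedAddCommGroup H] [InnerProductSpace ℂ H]
    [FiniteDimensional ℂ H] (K : Submodule ℂ H) : H →ₗ[ℂ] H :=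
  K.subtype ∘ₗ K.orthogonalProjectionOnto.toLinearMap

/-- The classical structure `δ_e : H →ₗ[ℂ] H ⊗[ℂ] H` associated with an orthonormal basis
`e`, determined by `δ_e x = ∑ i, ⟪e i, x⟫_ℂ • (e i ⊗ₜ e i)`. -/
noncomputable def delta {ι H : Type*} [Fintype ι] [NormedAddCommGroup H]
    [InnerProductSpace ℂ H] (e : ι → H) : H →ₗ[ℂ] H ⊗[ℂ] H :=
  ∑ i, (innerSL ℂ (e i)).toLinearMap.smulRight (e i ⊗ₜ[ℂ] e i)

/-- A subspace `K` of `H` is copyable along `δ_e` if `δ_e ∘ₗ P_K = (P_K ⊗ P_K) ∘ₗ δ_e`. -/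
def Copyable {ι H : Type*} [Fintype ι] [NormedAddCommGroup H] [InnerProductSpace ℂ H]
    [FiniteDimensional ℂ H] (e : ι → H) (K : Submodule ℂ H) : Prop :=
  delta e ∘ₗ projL K = TensorProduct.map (projL K) (projL K) ∘ₗ delta e

section aux
variable {ι H : Type*} [Fintype ι] [NormedAddCommGroup H] [InnerProductSpace ℂ H]
    [FiniteDimensional ℂ H]

lemma projL_apply (K : Submodule ℂ H) (x : H) :
    projL K x = (K.orthogonalProjectionOnto x : H) := rfl

lemma projL_mem (K : Submodule ℂ H) (x : H) : projL K x ∈ K := (K.orthogonalProjectionOnto x).2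

lemma projL_eq_self {K : Submodule ℂ H} {x : H} (h : x ∈ K) : projL K x = x :=
  Submodule.starProjection_eq_self_iff.mpr h

lemma projL_eq_zero {K : Submodule ℂ H} {x : H} (h : x ∈ Kᗮ) : projL K x = 0 := by
  rw [projL_apply, Submodule.orthogonalProjectionOnto_eq_zero_iff.mpr h, Submodule.coe_zero]

omit [FiniteDimensional ℂ H] in
lemma delta_apply {ι' : Type*} [Fintype ι'] (e : ι' → H) (x : H) :
    delta e x = ∑ i, ⟪e i, x⟫_ℂ • (e i ⊗ₜ[ℂ] e i) := by
  simp [delta]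

omit [FiniteDimensional ℂ H] in
lemma delta_basis (e : OrthonormalBasis ι ℂ H) (j : ι) :
    delta ⇑e (e j) = e j ⊗ₜ[ℂ] e j := by
  classical
  have horth := orthonormal_iff_ite.mp e.orthonormal
  rw [delta_apply]
  rw [Finset.sum_eq_single j]
  · rw [horth j j, if_pos rfl, one_smul]
  · intro i _ hij
    rw [horth i j, if_neg hij, zero_smul]
  · simp

lemma copyable_of (e : OrthonormalBasis ι ℂ H) {K : Submodule ℂ H}
    (h : ∀ j, e j ∈ K ∨ e j ∈ Kᗮ) : Copyable ⇑e K := by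
  apply e.toBasis.ext
  intro j
  simp only [LinearMap.comp_apply, OrthonormalBasis.coe_toBasis]
  rcases h j with hj | hj
  · rw [projL_eq_self hj, delta_basis, TensorProduct.map_tmul, projL_eq_self hj]
  · rw [projL_eq_zero hj, map_zero, delta_basis, TensorProduct.map_tmul,
      projL_eq_zero hj, TensorProduct.zero_tmul]

lemma copyable_mem_or (e : OrthonormalBasis ι ℂ H) {K : Submodule ℂ H}
    (h : Copyable ⇑e K) : ∀ j, e j ∈ K ∨ e j ∈ Kᗮ := by
  classical
  intro j
  have hj := LinearMap.ext_iff.mp h (e j)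
  simp only [LinearMap.comp_apply, delta_basis, TensorProduct.map_tmul] at hj
  set y := projL K (e j) with hy
  set c : ι → ℂ := fun i => ⟪e i, y⟫_ℂ with hc
  have horth := orthonormal_iff_ite.mp e.orthonormal
  have key : ∀ i k : ι, (if i = k then c i else 0) = c k * c i := by
    intro i k
    have h2 := congrArg (fun z => (e.toBasis.tensorProduct e.toBasis).repr z (i, k)) hj
    simp only [delta_apply, map_sum, map_smul, Finsupp.coe_finset_sum, Finset.sum_apply,
      Finsupp.coe_smul, Pi.smul_apply, Module.Basis.tensorProduct_repr_tmul_apply,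
      OrthonormalBasis.coe_toBasis_repr_apply, OrthonormalBasis.repr_apply_apply, horth,
      smul_eq_mul, mul_ite, mul_one, mul_zero, ite_mul, zero_mul, one_mul] at h2
    rw [← h2, Finset.sum_ite_eq]
    simp only [Finset.mem_univ, if_true]
    by_cases hik : i = k
    · subst hik; simp [c]
    · rw [if_neg hik, if_neg (Ne.symm hik)]
  have hcj : c j = ⟪y, y⟫_ℂ := by
    rw [hc]
    have h1 : ⟪y, y⟫_ℂ = ⟪e j, projL K y⟫_ℂ := by
      rw [hy, projL_apply, projL_apply]
      exact Submodule.inner_starProjection_left_eq_right K (e j) y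
    rw [h1, projL_eq_self (projL_mem K (e j))]
  by_cases h0 : c j = 0
  · right
    have : y = 0 := inner_self_eq_zero.mp (hcj.symm.trans h0)
    rw [← Submodule.orthogonalProjectionOnto_eq_zero_iff (K := K) (v := e j)]
    ext
    exact this
  · left
    have hcj1 : c j = 1 := by
      have := key j j
      rw [if_pos rfl] at this
      field_simp at this
      tauto
    have hy' : y = e j := by
      have := e.sum_repr' y
      rw [← this]
      rw [Finset.sum_eq_single j]
      · rw [show ⟪e j, y⟫_ℂ = c j from rfl, hcj1, one_smul]
      · intro i _ hij
        have hk := key i j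
        rw [if_neg hij, hcj1, one_mul] at hk
        rw [show ⟪e i, y⟫_ℂ = c i from rfl, ← hk, zero_smul]
      · simp
    rw [← hy']
    exact projL_mem K (e j)

end aux

/-- The subspaces of `H` copyable along `δ_e` form a Boolean subalgebra of the lattice of
subspaces of `H`: they contain `⊥` and `⊤`, are closed under `⊓`, `⊔` and orthogonal
complement `ᗮ`, and satisfy the distributive law. -/
theorem copyable_boolean_subalgebra
    {ι H : Type*} [Fintype ι] [NormedAddCommGroup H] [InnerProductSpace ℂ H]
    [FiniteDimensional ℂ H] (e : OrthonormalBasis ι ℂ H) :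
    Copyable (⇑e) (⊥ : Submodule ℂ H) ∧
    Copyable (⇑e) (⊤ : Submodule ℂ H) ∧
    (∀ K L : Submodule ℂ H, Copyable (⇑e) K → Copyable (⇑e) L → Copyable (⇑e) (K ⊓ L)) ∧
    (∀ K L : Submodule ℂ H, Copyable (⇑e) K → Copyable (⇑e) L → Copyable (⇑e) (K ⊔ L)) ∧
    (∀ K : Submodule ℂ H, Copyable (⇑e) K → Copyable (⇑e) Kᗮ) ∧
    (∀ K L M : Submodule ℂ H, Copyable (⇑e) K → Copyable (⇑e) L → Copyable (⇑e) M →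
      K ⊓ (L ⊔ M) = (K ⊓ L) ⊔ (K ⊓ M)) := by
  refine ⟨?_, ?_, ?_, ?_, ?_, ?_⟩
  · exact copyable_of e fun j => Or.inr (by rw [Submodule.bot_orthogonal_eq_top]; trivial)
  · exact copyable_of e fun j => Or.inl trivial
  · intro K L hK hL
    apply copyable_of
    intro j
    rcases copyable_mem_or e hK j with hjK | hjK
    · rcases copyable_mem_or e hL j with hjL | hjL
      · exact Or.inl (Submodule.mem_inf.mpr ⟨hjK, hjL⟩)
      · exact Or.inr (Submodule.orthogonal_le inf_le_right hjL)
    · exact Or.inr (Submodule.orthogonal_le inf_le_left hjK)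
  · intro K L hK hL
    apply copyable_of
    intro j
    rcases copyable_mem_or e hK j with hjK | hjK
    · exact Or.inl (Submodule.mem_sup_left hjK)
    · rcases copyable_mem_or e hL j with hjL | hjL
      · exact Or.inl (Submodule.mem_sup_right hjL)
      · refine Or.inr ?_
        rw [← Submodule.inf_orthogonal]
        exact ⟨hjK, hjL⟩
  · intro K hK
    apply copyable_of
    intro j
    rcases copyable_mem_or e hK j with hjK | hjK
    · exact Or.inr (K.le_orthogonal_orthogonal hjK)
    · exact Or.inl hjK
  · intro K L M hK hL hM
    refine le_antisymm ?_ (le_inf (sup_le inf_le_left inf_le_left)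
      (sup_le (le_trans inf_le_right le_sup_left) (le_trans inf_le_right le_sup_right)))
    intro x hx
    obtain ⟨hxK, hxLM⟩ := hx
    rw [← e.sum_repr' x]
    apply Submodule.sum_mem
    intro j _
    rcases copyable_mem_or e hK j with hjK | hjK
    · rcases copyable_mem_or e hL j with hjL | hjL
      · exact Submodule.mem_sup_left (Submodule.smul_mem _ _ (Submodule.mem_inf.mpr ⟨hjK, hjL⟩))
      · rcases copyable_mem_or e hM j with hjM | hjM
        · exact Submodule.mem_sup_right
            (Submodule.smul_mem _ _ (Submodule.mem_inf.mpr ⟨hjK, hjM⟩))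
        · have hLM : e j ∈ (L ⊔ M)ᗮ := by
            rw [← Submodule.inf_orthogonal]; exact ⟨hjL, hjM⟩
          rw [Submodule.inner_left_of_mem_orthogonal hxLM hLM, zero_smul]
          exact Submodule.zero_mem _
    · rw [Submodule.inner_left_of_mem_orthogonal hxK hjK, zero_smul]
      exact Submodule.zero_mem _
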